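/- Let A ⊆ X be bounded and ε ≥ 0. If A is ε-weakly relatively compact, then for every sequence (x_n) in A and every r > ε, the intersection over k of the norm-closed convex hulls of ({x_n : n ≥ k} + r·B_X) is nonempty. -/

import Mathlib

noncomputable section
open Filter Topology Set NormedSpace Pointwise

variable {X : Type*} [NormedAddCommGroup X] [NormedSpace ℝ X] [CompleteSpace X]

/-- `B` is a boundary for `X`: a subset of the dual unit sphere on which every
element of `X` attains its norm. -/
def IsBoundary (B : Set (StrongDual ℝ X)) : Prop :=
  (∀ f ∈ B, ‖f‖ = 1) ∧ ∀ x : X, ∃ f ∈ B, f x = ‖x‖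

/-- The closure of `S` in the topology `σ_B` of pointwise convergence on `B`. -/
def sigmaClosure (B : Set (StrongDual ℝ X)) (S : Set X) : Set X :=
  {x | ∀ ε > (0 : ℝ), ∀ F : Finset (StrongDual ℝ X), (F : Set (StrongDual ℝ X)) ⊆ B →
    ∃ y ∈ S, ∀ f ∈ F, |f x - f y| < ε}

/-- The weak*-closure of a set of functionals (pointwise convergence on the predual). -/
def weakStarClosure {Y : Type*} [NormedAddCommGroup Y] [NormedSpace ℝ Y]
    (S : Set (StrongDual ℝ Y)) : Set (StrongDual ℝ Y) :=
  {φ | ∀ ε > (0 : ℝ), ∀ F : Finset Y, ∃ ψ ∈ S, ∀ y ∈ F, |φ y - ψ y| < ε}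

/-- `A` is `δ`-weakly relatively compact: every element of the weak*-closure of
`A` in the bidual is within distance `δ` of `X`. -/
def EpsWRC (A : Set X) (δ : ℝ) : Prop :=
  ∀ φ ∈ weakStarClosure ((inclusionInDoubleDual ℝ X) '' A),
    Metric.infDist φ (Set.range (inclusionInDoubleDual ℝ X)) ≤ δ

theorem epsWRC_imp_chains (A : Set X) (hA : Bornology.IsBounded A)
    (ε : ℝ) (hε : 0 ≤ ε) (h : EpsWRC A ε) :
    ∀ x : ℕ → X, (∀ n, x n ∈ A) → ∀ r > ε,
      (⋂ k : ℕ, closure (convexHull ℝ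
        ({y : X | ∃ n ≥ k, y = x n} + r • Metric.closedBall (0 : X) 1))).Nonempty := by
  intro x hx r hr
  have hr0 : 0 < r := lt_of_le_of_lt hε hr
  set J := inclusionInDoubleDual ℝ X with hJ
  obtain ⟨M, hM⟩ := hA.exists_norm_le
  -- the sequence in the weak dual
  set ψ : ℕ → WeakDual ℝ (StrongDual ℝ X) := fun n => StrongDual.toWeakDual (J (x n)) with hψ
  have hψmem : ∀ n, ψ n ∈ WeakDual.toStrongDual ⁻¹' Metric.closedBall 0 M := by
    intro n
    simp only [Set.mem_preimage, Metric.mem_closedBall, dist_zero_right]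
    exact le_trans (by exact (dist_zero_right (J (x n))).trans_le (double_dual_bound ℝ X (x n))) (hM _ (hx n))
  have hcpt : IsCompact (WeakDual.toStrongDual ⁻¹' Metric.closedBall (0 : StrongDual ℝ (StrongDual ℝ X)) M) :=
    WeakDual.isCompact_closedBall 0 M
  have hle : Filter.map ψ atTop ≤ 𝓟 (WeakDual.toStrongDual ⁻¹' Metric.closedBall 0 M) := by
    rw [le_principal_iff, mem_map]
    exact Eventually.of_forall hψmem
  obtain ⟨φ₀, -, hφ₀⟩ := hcpt.exists_clusterPt hle
  set φ : StrongDual ℝ (StrongDual ℝ X) := WeakDual.toStrongDual φ₀ with hφdef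
  -- cluster point property
  have key : ∀ δ > (0 : ℝ), ∀ F : Finset (StrongDual ℝ X), ∀ k : ℕ,
      ∃ n ≥ k, ∀ f ∈ F, |φ f - f (x n)| < δ := by
    intro δ hδ F k
    have hU : (⋂ f ∈ F, {ψ' : WeakDual ℝ (StrongDual ℝ X) | |φ₀ f - ψ' f| < δ}) ∈ 𝓝 φ₀ := by
      refine IsOpen.mem_nhds ?_ ?_
      · refine isOpen_biInter_finset fun f _ => ?_
        have : {ψ' : WeakDual ℝ (StrongDual ℝ X) | |φ₀ f - ψ' f| < δ}
            = (fun ψ' : WeakDual ℝ (StrongDual ℝ X) => ψ' f) ⁻¹' Metric.ball (φ₀ f) δ := by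
          ext ψ'
          simp [Metric.mem_ball, Real.dist_eq, abs_sub_comm]
        rw [this]
        exact (WeakDual.eval_continuous f).isOpen_preimage _ Metric.isOpen_ball
      · simp [hδ]
    have hfreq : ∃ᶠ n in atTop, ψ n ∈ ⋂ f ∈ F, {ψ' : WeakDual ℝ (StrongDual ℝ X) | |φ₀ f - ψ' f| < δ} :=
      (mapClusterPt_iff_frequently.mp hφ₀) _ hU
    obtain ⟨n, hn, hmem⟩ := frequently_atTop.mp hfreq k
    refine ⟨n, hn, fun f hf => ?_⟩
    have := Set.mem_iInter₂.mp hmem f hf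
    exact this
  -- φ is in the weak* closure of J '' A
  have hφcl : φ ∈ weakStarClosure (J '' A) := by
    intro δ hδ F
    obtain ⟨n, -, hn⟩ := key δ hδ F 0
    exact ⟨J (x n), Set.mem_image_of_mem _ (hx n), fun f hf => hn f hf⟩
  -- φ is within distance r of range J
  have hinf : Metric.infDist φ (Set.range J) < r := lt_of_le_of_lt (h φ hφcl) hr
  obtain ⟨z, ⟨w, rfl⟩, hz⟩ := (Metric.infDist_lt_iff ⟨J 0, Set.mem_range_self 0⟩).mp hinf
  refine ⟨w, Set.mem_iInter.mpr fun k => ?_⟩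
  by_contra hw
  obtain ⟨f, u, hfu, hufw⟩ := geometric_hahn_banach_closed_point
    ((convex_convexHull ℝ _).closure) isClosed_closure hw
  -- points of the set
  have hpt : ∀ n, k ≤ n → ∀ b : X, ‖b‖ ≤ 1 → f (x n) + r * f b < u := by
    intro n hn b hb
    have hmem : x n + r • b ∈ {y : X | ∃ n ≥ k, y = x n} + r • Metric.closedBall (0 : X) 1 :=
      Set.add_mem_add ⟨n, hn, rfl⟩ (Set.smul_mem_smul_set (by simpa using hb))
    have := hfu _ (subset_closure (subset_convexHull ℝ _ hmem))
    simpa [mul_comm] using this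
  by_cases hf0 : f = 0
  · have h1 := hpt k le_rfl 0 (by simp)
    simp [hf0] at h1 hufw
    linarith
  have hfpos : 0 < ‖f‖ := norm_pos_iff.mpr hf0
  -- norm bound
  have hnorm : ∀ n, k ≤ n → f (x n) + r * ‖f‖ ≤ u := by
    intro n hn
    have hupos : 0 < u - f (x n) := by
      have := hpt n hn 0 (by simp)
      simp at this; linarith
    have : ‖f‖ ≤ (u - f (x n)) / r := by
      refine ContinuousLinearMap.opNorm_le_of_unit_norm (div_nonneg hupos.le hr0.le) fun b hb => ?_
      have h1 := hpt n hn b hb.le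
      have h2 := hpt n hn (-b) (by simpa using hb.le)
      rw [map_neg] at h2
      have hA : f b < (u - f (x n)) / r := (lt_div_iff₀ hr0).mpr (by rw [mul_comm]; linarith)
      have hB : -(f b) < (u - f (x n)) / r := (lt_div_iff₀ hr0).mpr (by rw [mul_comm]; linarith)
      rw [Real.norm_eq_abs, abs_le]
      exact ⟨by linarith, hA.le⟩
    have h6 : r * ‖f‖ ≤ r * ((u - f (x n)) / r) := mul_le_mul_of_nonneg_left this hr0.le
    have h7 : r * ((u - f (x n)) / r) = u - f (x n) := by field_simp
    linarith
  -- final contradiction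
  have hdpos : 0 < f w - u := by linarith
  obtain ⟨n, hn, hfn⟩ := key (f w - u) hdpos {f} k
  have hfn' : |φ f - f (x n)| < f w - u := hfn f (Finset.mem_singleton_self f)
  have hφlt : φ f < f (x n) + (f w - u) := by
    have := (abs_lt.mp hfn').2
    linarith
  have h1 : (J w) f - φ f ≤ ‖J w - φ‖ * ‖f‖ := by
    have h2 := ContinuousLinearMap.le_opNorm (J w - φ) f
    rw [ContinuousLinearMap.sub_apply, Real.norm_eq_abs] at h2
    exact le_trans (le_abs_self _) h2
  have h2 : ‖J w - φ‖ < r := by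
    calc ‖J w - φ‖ = dist (J w) φ := (dist_eq_norm (J w) φ).symm
      _ = dist φ (J w) := dist_comm _ _
      _ < r := hz
  have h3 : ‖J w - φ‖ * ‖f‖ < r * ‖f‖ := mul_lt_mul_of_pos_right h2 hfpos
  have h4 : (J w) f = f w := rfl
  have h5 := hnorm n hn
  linarith
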